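/- arXiv:2511.00874 — 2 statements merged into one kernel-verified Lean document; each statement's English description precedes it below -/
import Mathlib

section
/- Let L : ℝ^d → ℝ be differentiable with 𝓛-Lipschitz gradient (𝓛 > 0). Let w ∈ ℝ^d, let G be a square-integrable ℝ^d-valued random vector with mean Ĝ = E[G], and suppose ‖Ĝ − ∇L(w)‖ ≤ B for some B ≥ 0 and E[‖G − Ĝ‖²] ≤ V² for some V ≥ 0. Let 0 < η ≤ 1/(4𝓛) and w' = w − η·G. Then the one-step descent inequality holds: (η/4)·‖∇L(w)‖² ≤ L(w) − E[L(w')] + η·(1/2 + η𝓛)·B² + (η²·𝓛/2)·V². -/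
set_option maxHeartbeats 1000000

open MeasureTheory

open RealInnerProductSpace

lemma taylor_bound' {d : ℕ} {L : EuclideanSpace ℝ (Fin d) → ℝ} {𝓛 : ℝ}
    (h𝓛 : 0 ≤ 𝓛) (hdiff : Differentiable ℝ L)
    (hlip : ∀ w w' : EuclideanSpace ℝ (Fin d),
      ‖gradient L w' - gradient L w‖ ≤ 𝓛 * ‖w' - w‖)
    (x y : EuclideanSpace ℝ (Fin d)) :
    abs (L y - L x - ⟪gradient L x, y - x⟫) ≤ 𝓛 / 2 * ‖y - x‖ ^ 2 := by
  set v := y - x with hv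
  have hxy : x + v = y := by rw [hv]; abel
  have hgc : Continuous (gradient L) := by
    have hl : LipschitzWith ⟨𝓛, h𝓛⟩ (gradient L) :=
      LipschitzWith.of_dist_le_mul fun a b => by
        rw [dist_eq_norm, dist_eq_norm]; exact hlip b a
    exact hl.continuous
  have hline : ∀ t : ℝ, HasDerivAt (fun t : ℝ => x + t • v) v t := fun t => by
    simpa using ((hasDerivAt_id t).smul_const v).const_add x
  have hφ : ∀ t : ℝ, HasDerivAt (fun t : ℝ => L (x + t • v))
      ⟪gradient L (x + t • v), v⟫ t := fun t => by
    have h1 := (hdiff (x + t • v)).hasGradientAt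
    have h2 := h1.hasFDerivAt.comp_hasDerivAt t (hline t)
    exact h2
  have hcont : Continuous fun t : ℝ => ⟪gradient L (x + t • v), v⟫ :=
    (hgc.comp (by continuity)).inner continuous_const
  have hFTC : ∫ t in (0:ℝ)..1, ⟪gradient L (x + t • v), v⟫ = L y - L x := by
    have h := intervalIntegral.integral_eq_sub_of_hasDerivAt
      (f := fun t : ℝ => L (x + t • v)) (fun t _ => hφ t)
      (hcont.intervalIntegrable 0 1)
    simpa [hxy] using h
  have key : L y - L x - ⟪gradient L x, v⟫
      = ∫ t in (0:ℝ)..1, ⟪gradient L (x + t • v) - gradient L x, v⟫ := by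
    have hsub : ∫ t in (0:ℝ)..1, (⟪gradient L (x + t • v), v⟫ - ⟪gradient L x, v⟫)
        = (∫ t in (0:ℝ)..1, ⟪gradient L (x + t • v), v⟫) - ⟪gradient L x, v⟫ := by
      rw [intervalIntegral.integral_sub (hcont.intervalIntegrable 0 1)
        intervalIntegrable_const]
      simp
    rw [← hFTC, ← hsub]
    simp [inner_sub_left]
  rw [key, ← Real.norm_eq_abs]
  have hb : ‖∫ t in (0:ℝ)..1, ⟪gradient L (x + t • v) - gradient L x, v⟫‖
      ≤ |∫ t in (0:ℝ)..1, 𝓛 * ‖v‖ ^ 2 * t| := by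
    apply intervalIntegral.norm_integral_le_abs_of_norm_le
    · filter_upwards [ae_restrict_mem measurableSet_Ioc] with t ht
      rw [Set.uIoc_of_le (by norm_num : (0:ℝ) ≤ 1)] at ht
      calc ‖⟪gradient L (x + t • v) - gradient L x, v⟫‖
          ≤ ‖gradient L (x + t • v) - gradient L x‖ * ‖v‖ := norm_inner_le_norm _ _
        _ ≤ 𝓛 * ‖x + t • v - x‖ * ‖v‖ := by
            have := hlip x (x + t • v)
            nlinarith [norm_nonneg v]
        _ = 𝓛 * ‖v‖ ^ 2 * t := by
            rw [add_sub_cancel_left, norm_smul, Real.norm_eq_abs,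
              abs_of_pos ht.1]; ring
    · exact (by fun_prop : Continuous fun t : ℝ => 𝓛 * ‖v‖ ^ 2 * t).intervalIntegrable 0 1
  refine hb.trans (le_of_eq ?_)
  rw [intervalIntegral.integral_const_mul, integral_id]
  rw [abs_of_nonneg (by positivity)]
  ring

/-- One-step descent inequality for SGD with a biased, noisy gradient estimator: if `L` is
differentiable with `𝓛`-Lipschitz gradient, `G` is a square-integrable random vector with
mean `Ĝ`, bias `‖Ĝ − ∇L(w)‖ ≤ B`, variance `E[‖G − Ĝ‖²] ≤ V²`, and `0 < η ≤ 1/(4𝓛)`, then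
for `w' = w − η·G`:
`(η/4)·‖∇L(w)‖² ≤ L(w) − E[L(w')] + η·(1/2 + η𝓛)·B² + (η²·𝓛/2)·V²`. -/
theorem one_step_descent
    {Ω : Type*} [MeasurableSpace Ω] (μ : Measure Ω) [IsProbabilityMeasure μ]
    (d : ℕ) (L : EuclideanSpace ℝ (Fin d) → ℝ) (𝓛 : ℝ) (h𝓛 : 0 < 𝓛)
    (hdiff : Differentiable ℝ L)
    (hlip : ∀ w w' : EuclideanSpace ℝ (Fin d),
      ‖gradient L w' - gradient L w‖ ≤ 𝓛 * ‖w' - w‖)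
    (w : EuclideanSpace ℝ (Fin d))
    (G : Ω → EuclideanSpace ℝ (Fin d)) (hG : MemLp G 2 μ)
    (B V : ℝ) (hB : 0 ≤ B) (hV : 0 ≤ V)
    (hbias : ‖(∫ ω, G ω ∂μ) - gradient L w‖ ≤ B)
    (hvar : ∫ ω, ‖G ω - ∫ ω', G ω' ∂μ‖ ^ 2 ∂μ ≤ V ^ 2)
    (η : ℝ) (hη : 0 < η) (hη' : η ≤ 1 / (4 * 𝓛)) :
    (η / 4) * ‖gradient L w‖ ^ 2 ≤
      L w - (∫ ω, L (w - η • G ω) ∂μ)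
        + η * (1 / 2 + η * 𝓛) * B ^ 2 + (η ^ 2 * 𝓛 / 2) * V ^ 2 := by
  set g := gradient L w with hg
  set Gbar := ∫ ω, G ω ∂μ with hGbar
  -- integrability facts
  have hGint : Integrable G μ := hG.integrable one_le_two
  have hGsq : Integrable (fun ω => ‖G ω‖ ^ 2) μ :=
    (memLp_two_iff_integrable_sq_norm hG.1).mp hG
  have hGc : MemLp (fun ω => G ω - Gbar) 2 μ := hG.sub (memLp_const Gbar)
  have hGcsq : Integrable (fun ω => ‖G ω - Gbar‖ ^ 2) μ :=
    (memLp_two_iff_integrable_sq_norm hGc.1).mp hGc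
  have hGin : Integrable (fun ω => ⟪g, G ω⟫) μ := hGint.const_inner g
  -- Taylor bound pointwise
  have htay : ∀ ω, abs (L (w - η • G ω) - L w - ⟪g, (w - η • G ω) - w⟫)
      ≤ 𝓛 / 2 * ‖(w - η • G ω) - w‖ ^ 2 := fun ω =>
    taylor_bound' h𝓛.le hdiff hlip w (w - η • G ω)
  have hsimp : ∀ ω : Ω, (w - η • G ω) - w = -(η • G ω) := fun ω => by abel
  have htay' : ∀ ω, abs (L (w - η • G ω) - L w + η * ⟪g, G ω⟫)
      ≤ 𝓛 / 2 * (η ^ 2 * ‖G ω‖ ^ 2) := by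
    intro ω
    have h := htay ω
    rw [hsimp ω] at h
    rw [inner_neg_right, real_inner_smul_right] at h
    rw [norm_neg, norm_smul, Real.norm_eq_abs, abs_of_pos hη, mul_pow] at h
    convert h using 2 <;> ring
  -- measurability / integrability of L (w - η • G ·)
  have hmeas : AEStronglyMeasurable (fun ω => L (w - η • G ω)) μ := by
    exact hdiff.continuous.comp_aestronglyMeasurable
      (aestronglyMeasurable_const.sub (hG.1.const_smul η))
  have hdom1 : Integrable (fun ω => η * ‖g‖ * ‖G ω‖) μ := hGint.norm.const_mul _
  have hdom2 : Integrable (fun ω => 𝓛 / 2 * (η ^ 2 * ‖G ω‖ ^ 2)) μ := by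
    have h := hGsq.const_mul (𝓛 / 2 * η ^ 2)
    refine h.congr ?_
    filter_upwards with ω; ring
  have hdom : Integrable (fun ω => abs (L w) + η * ‖g‖ * ‖G ω‖
      + 𝓛 / 2 * (η ^ 2 * ‖G ω‖ ^ 2)) μ :=
    ((integrable_const _).add hdom1).add hdom2
  have hLint : Integrable (fun ω => L (w - η • G ω)) μ := by
    refine hdom.mono' hmeas ?_
    filter_upwards with ω
    have h := htay' ω
    have h2 : abs (⟪g, G ω⟫) ≤ ‖g‖ * ‖G ω‖ := abs_real_inner_le_norm g (G ω)
    rw [Real.norm_eq_abs]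
    have h5 : abs (L (w - η • G ω))
        ≤ abs (L (w - η • G ω) - L w + η * ⟪g, G ω⟫) + abs (L w - η * ⟪g, G ω⟫) := by
      have h6 := abs_add_le (L (w - η • G ω) - L w + η * ⟪g, G ω⟫) (L w - η * ⟪g, G ω⟫)
      have h7 : (L (w - η • G ω) - L w + η * ⟪g, G ω⟫) + (L w - η * ⟪g, G ω⟫)
          = L (w - η • G ω) := by ring
      rw [h7] at h6; exact h6
    have h3 : abs (L w - η * ⟪g, G ω⟫) ≤ abs (L w) + abs η * abs (⟪g, G ω⟫ : ℝ) := by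
      have := abs_sub (L w) (η * ⟪g, G ω⟫)
      rw [abs_mul] at this; exact this
    have h8 : abs η * abs (⟪g, G ω⟫ : ℝ) ≤ η * (‖g‖ * ‖G ω‖) := by
      rw [abs_of_pos hη]
      exact mul_le_mul_of_nonneg_left h2 hη.le
    have h9 : η * ‖g‖ * ‖G ω‖ = η * (‖g‖ * ‖G ω‖) := by ring
    linarith
  -- integral bound
  have hIle : ∫ ω, L (w - η • G ω) ∂μ
      ≤ L w - η * ⟪g, Gbar⟫ + 𝓛 / 2 * η ^ 2 * ∫ ω, ‖G ω‖ ^ 2 ∂μ := by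
    have hrhsint : Integrable (fun ω => L w - η * ⟪g, G ω⟫ + 𝓛 / 2 * η ^ 2 * ‖G ω‖ ^ 2) μ :=
      ((integrable_const (L w)).sub (hGin.const_mul η)).add (hGsq.const_mul _)
    have hmono : ∫ ω, L (w - η • G ω) ∂μ
        ≤ ∫ ω, (L w - η * ⟪g, G ω⟫ + 𝓛 / 2 * η ^ 2 * ‖G ω‖ ^ 2) ∂μ := by
      refine integral_mono hLint hrhsint fun ω => ?_
      have h := htay' ω
      have := abs_le.mp h
      linarith [this.2]
    refine hmono.trans (le_of_eq ?_)
    have hint1 : Integrable (fun ω => L w - η * ⟪g, G ω⟫) μ :=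
      (integrable_const (L w)).sub (hGin.const_mul η)
    have hint2 : Integrable (fun ω => 𝓛 / 2 * η ^ 2 * ‖G ω‖ ^ 2) μ := hGsq.const_mul _
    rw [integral_add hint1 hint2,
      integral_sub (integrable_const (L w)) (hGin.const_mul η),
      integral_const, integral_const_mul, integral_const_mul, integral_inner hGint]
    simp [measure_univ]
    exact Or.inl rfl
  -- variance decomposition
  have hEsq : ∫ ω, ‖G ω‖ ^ 2 ∂μ = (∫ ω, ‖G ω - Gbar‖ ^ 2 ∂μ) + ‖Gbar‖ ^ 2 := by
    have hpt : ∀ ω, ‖G ω‖ ^ 2 = ‖G ω - Gbar‖ ^ 2 + 2 * ⟪Gbar, G ω⟫ - ‖Gbar‖ ^ 2 := fun ω => by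
      have := norm_sub_sq_real (G ω) Gbar
      rw [real_inner_comm] at this
      linarith
    have hin : Integrable (fun ω => ⟪Gbar, G ω⟫) μ := hGint.const_inner Gbar
    calc ∫ ω, ‖G ω‖ ^ 2 ∂μ
        = ∫ ω, (‖G ω - Gbar‖ ^ 2 + 2 * ⟪Gbar, G ω⟫ - ‖Gbar‖ ^ 2) ∂μ := by
          exact integral_congr_ae (Filter.Eventually.of_forall hpt)
      _ = (∫ ω, ‖G ω - Gbar‖ ^ 2 ∂μ) + 2 * ⟪Gbar, Gbar⟫ - ‖Gbar‖ ^ 2 := by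
          have hA : Integrable (fun ω => ‖G ω - Gbar‖ ^ 2 + 2 * ⟪Gbar, G ω⟫) μ :=
            hGcsq.add (hin.const_mul 2)
          rw [integral_sub hA (integrable_const _),
            integral_add hGcsq (hin.const_mul 2), integral_const_mul,
            integral_inner hGint, integral_const]
          simp [measure_univ]
          exact real_inner_self_eq_norm_sq Gbar
      _ = (∫ ω, ‖G ω - Gbar‖ ^ 2 ∂μ) + ‖Gbar‖ ^ 2 := by
          rw [real_inner_self_eq_norm_sq]; ring
  -- algebra
  set x := ‖g‖ ^ 2 with hx
  set t := (⟪g, Gbar - g⟫ : ℝ) with ht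
  set c := ‖Gbar - g‖ with hc
  set s := ∫ ω, ‖G ω - Gbar‖ ^ 2 ∂μ with hs
  have hsnn : 0 ≤ s := integral_nonneg fun ω => by positivity
  have hip : (⟪g, Gbar⟫ : ℝ) = x + t := by
    rw [ht, inner_sub_right, real_inner_self_eq_norm_sq, hx]; ring
  have hGbarsq : ‖Gbar‖ ^ 2 = x + 2 * t + c ^ 2 := by
    have h := norm_add_sq_real g (Gbar - g)
    rw [add_sub_cancel] at h
    rw [h, hx, ht, hc]
  have hηL : η * 𝓛 ≤ 1 / 4 := by
    rw [le_div_iff₀ (by positivity : (0:ℝ) < 4 * 𝓛)] at hη'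
    linarith
  have hcB : c ≤ B := hbias
  have hcnn : 0 ≤ c := norm_nonneg _
  have htlb : -(x + c ^ 2) / 2 ≤ t := by
    have h1 : abs t ≤ ‖g‖ * c := abs_real_inner_le_norm g (Gbar - g)
    have h2 := sq_nonneg (‖g‖ - c)
    have h3 := neg_abs_le t
    rw [hx]
    nlinarith
  -- combine
  have h_a : 0 ≤ η * (1 - 𝓛 * η) * (t + (x + c ^ 2) / 2) := by
    apply mul_nonneg (mul_nonneg hη.le (by nlinarith)) (by linarith)
  have h_b : 0 ≤ η * (B ^ 2 - c ^ 2) := mul_nonneg hη.le (by nlinarith)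
  have h_c : 0 ≤ 𝓛 * η ^ 2 * (V ^ 2 - s) := mul_nonneg (by positivity) (by linarith)
  have h_d : 0 ≤ η * x := mul_nonneg hη.le (by positivity)
  have h_e : 0 ≤ η ^ 2 * 𝓛 * B ^ 2 := by positivity
  rw [hEsq, hip, hGbarsq] at hIle
  nlinarith [hIle, h_a, h_b, h_c, h_d, h_e]
end

section
/- Let (Ω, 𝓕, P) be a probability space with filtration (𝓕_t)_{t≥0}. Let L : ℝ^d → ℝ be differentiable with 𝓛-Lipschitz gradient (𝓛 > 0) and bounded below by L_min. Fix a step size 0 < η ≤ 1/(4𝓛), a horizon T ≥ 1, constants B_W ≥ 0, σ_S ≥ 0, σ_Q ≥ 0, and batch size b ≥ 1. Let (w_t)_{t≥0} be an adapted ℝ^d-valued process with w_0 ∈ 𝓕_0, and let (G_t)_{t≥0} be square-integrable ℝ^d-valued random vectors with G_t measurable with respect to 𝓕_{t+1}, satisfying the update w_{t+1} = w_t − η·G_t. Suppose for every t: (i) ‖E[G_t | 𝓕_t] − ∇L(w_t)‖ ≤ B_W almost surely, and (ii) E[‖G_t − E[G_t | 𝓕_t]‖² | 𝓕_t] ≤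 (σ_S² + σ_Q²)/b almost surely. Then (1/T)·Σ_{t=0}^{T−1} E[‖∇L(w_t)‖²] ≤ 4·(E[L(w_0)] − L_min)/(η·T) + (2 + 4η𝓛)·B_W² + 2η𝓛·(σ_S² + σ_Q²)/b. -/
open MeasureTheory
open scoped RealInnerProductSpace

section Descent

variable {E : Type*} [NormedAddCommGroup E] [InnerProductSpace ℝ E] [CompleteSpace E]

lemma sgd_descent_lemma {L : E → ℝ} {K : ℝ} (hK : 0 ≤ K)
    (hdiff : Differentiable ℝ L)
    (hlip : ∀ x y : E, ‖gradient L y - gradient L x‖ ≤ K * ‖y - x‖) (x y : E) :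
    L y ≤ L x + ⟪gradient L x, y - x⟫ + K / 2 * ‖y - x‖ ^ 2 := by
  set v := y - x with hv
  have hgc : Continuous (gradient L) := by
    have hl : LipschitzWith (Real.toNNReal K) (gradient L) := by
      apply LipschitzWith.of_dist_le_mul
      intro a b
      rw [dist_eq_norm, dist_eq_norm, Real.coe_toNNReal K hK]
      exact hlip b a
    exact hl.continuous
  have hderiv : ∀ t : ℝ, HasDerivAt (fun s : ℝ => L (x + s • v))
      ⟪gradient L (x + t • v), v⟫ t := by
    intro t
    have h1 : HasDerivAt (fun s : ℝ => x + s • v) v t := by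
      simpa using ((hasDerivAt_id t).smul_const v).const_add x
    have h3 := ((hdiff (x + t • v)).hasGradientAt).hasFDerivAt
    have h4 := h3.comp_hasDerivAt t h1
    simpa [InnerProductSpace.toDual_apply_apply, Function.comp_def] using h4
  have hcont : Continuous fun t : ℝ => ⟪gradient L (x + t • v), v⟫ :=
    (hgc.comp (by continuity)).inner continuous_const
  have hint : IntervalIntegrable (fun t : ℝ => ⟪gradient L (x + t • v), v⟫)
      MeasureTheory.volume 0 1 := hcont.intervalIntegrable 0 1
  have heq : (∫ t in (0:ℝ)..1, ⟪gradient L (x + t • v), v⟫)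
      = L (x + (1:ℝ) • v) - L (x + (0:ℝ) • v) :=
    intervalIntegral.integral_eq_sub_of_hasDerivAt (fun t _ => hderiv t) hint
  have hmono : (∫ t in (0:ℝ)..1, ⟪gradient L (x + t • v), v⟫)
      ≤ ∫ t in (0:ℝ)..1, (⟪gradient L x, v⟫ + (K * ‖v‖ ^ 2) * t) := by
    apply intervalIntegral.integral_mono_on (by norm_num) hint
    · exact (intervalIntegrable_const).add
        ((intervalIntegral.intervalIntegrable_id).const_mul _)
    · intro t ht
      have h1 : ⟪gradient L (x + t • v) - gradient L x, v⟫
          ≤ ‖gradient L (x + t • v) - gradient L x‖ * ‖v‖ := real_inner_le_norm _ _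
      have h2 : ‖gradient L (x + t • v) - gradient L x‖ ≤ K * (t * ‖v‖) := by
        have h5 := hlip x (x + t • v)
        simpa [norm_smul, abs_of_nonneg ht.1] using h5
      have h3 : ⟪gradient L (x + t • v) - gradient L x, v⟫
          = ⟪gradient L (x + t • v), v⟫ - ⟪gradient L x, v⟫ := inner_sub_left _ _ _
      nlinarith [norm_nonneg v]
  have hval : (∫ t in (0:ℝ)..1, (⟪gradient L x, v⟫ + (K * ‖v‖ ^ 2) * t))
      = ⟪gradient L x, v⟫ + K / 2 * ‖v‖ ^ 2 := by
    rw [intervalIntegral.integral_add intervalIntegrable_const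
      ((intervalIntegral.intervalIntegrable_id).const_mul _),
      intervalIntegral.integral_const, intervalIntegral.integral_const_mul, integral_id]
    ring_nf
  have hx1 : x + (1:ℝ) • v = y := by rw [one_smul, hv]; abel
  have hx0 : x + (0:ℝ) • v = x := by rw [zero_smul, add_zero]
  rw [hx1, hx0] at heq
  linarith [heq ▸ hmono, hval ▸ hmono]

end Descent

section CondexpAux

variable {Ω : Type*} {m m0 : MeasurableSpace Ω} {μ : Measure Ω}

lemma sgd_integrable_inner {E : Type*} [NormedAddCommGroup E] [InnerProductSpace ℝ E]
    {f g : Ω → E} (hf : MemLp f 2 μ) (hg : MemLp g 2 μ) :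
    Integrable (fun ω => ⟪f ω, g ω⟫) μ := by
  have h := L2.integrable_inner (𝕜 := ℝ) (hf.toLp f) (hg.toLp g)
  refine h.congr ?_
  filter_upwards [hf.coeFn_toLp, hg.coeFn_toLp] with ω h1 h2
  rw [h1, h2]

lemma sgd_integrable_mul {f g : Ω → ℝ} (hf : MemLp f 2 μ) (hg : MemLp g 2 μ) :
    Integrable (fun ω => f ω * g ω) μ := by
  have h := sgd_integrable_inner hf hg
  simpa [RCLike.inner_apply, conj_trivial, mul_comm] using h

lemma sgd_condexp_clm (hm : m ≤ m0) [IsFiniteMeasure μ]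
    {E F : Type*} [NormedAddCommGroup E] [NormedSpace ℝ E] [CompleteSpace E]
    [NormedAddCommGroup F] [NormedSpace ℝ F] [CompleteSpace F]
    (T : E →L[ℝ] F) {f : Ω → E} (hf : Integrable f μ) :
    (fun ω => T ((μ[f|m]) ω)) =ᵐ[μ] μ[fun ω => T (f ω)|m] := by
  have hTf : Integrable (fun ω => T (f ω)) μ := T.integrable_comp hf
  refine ae_eq_condExp_of_forall_setIntegral_eq hm hTf
    (fun s _ _ => (T.integrable_comp integrable_condExp).integrableOn)
    (fun s hs hμs => ?_) ?_
  · rw [show (∫ x in s, T ((μ[f|m]) x) ∂μ) = T (∫ x in s, (μ[f|m]) x ∂μ) from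
      T.integral_comp_comm integrable_condExp.integrableOn,
      setIntegral_condExp hm hf hs,
      show (∫ x in s, T (f x) ∂μ) = T (∫ x in s, f x ∂μ) from
        T.integral_comp_comm hf.integrableOn]
  · exact (T.continuous.comp_stronglyMeasurable stronglyMeasurable_condExp).aestronglyMeasurable

lemma sgd_integral_inner_condexp (hm : m ≤ m0) [IsProbabilityMeasure μ] {d : ℕ}
    {f h : Ω → EuclideanSpace ℝ (Fin d)}
    (hfm : StronglyMeasurable[m] f) (hf : MemLp f 2 μ) (hh : MemLp h 2 μ) :
    ∫ ω, ⟪f ω, h ω⟫ ∂μ = ∫ ω, ⟪f ω, (μ[h|m]) ω⟫ ∂μ := by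
  have hhint : Integrable h μ := hh.integrable (by norm_num)
  have hfi : ∀ i : Fin d, MemLp (fun ω => f ω i) 2 μ := fun i =>
    (EuclideanSpace.proj (𝕜 := ℝ) i).comp_memLp' hf
  have hhi : ∀ i : Fin d, MemLp (fun ω => h ω i) 2 μ := fun i =>
    (EuclideanSpace.proj (𝕜 := ℝ) i).comp_memLp' hh
  have hcoord : ∀ i : Fin d, (fun ω => (μ[h|m]) ω i) =ᵐ[μ] μ[fun ω => h ω i|m] :=
    fun i => sgd_condexp_clm hm (EuclideanSpace.proj (𝕜 := ℝ) i) hhint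
  have hpull : ∀ i : Fin d, μ[(fun ω => f ω i) * (fun ω => h ω i)|m]
      =ᵐ[μ] (fun ω => f ω i) * μ[(fun ω => h ω i)|m] := fun i =>
    condExp_mul_of_stronglyMeasurable_left
      ((EuclideanSpace.proj (𝕜 := ℝ) i).continuous.comp_stronglyMeasurable hfm)
      (by exact sgd_integrable_mul (hfi i) (hhi i))
      ((hhi i).integrable (by norm_num))
  have hmuli : ∀ i : Fin d, Integrable (fun ω => f ω i * (μ[h|m]) ω i) μ := by
    intro i
    refine (integrable_condExp.congr (hpull i)).congr ?_
    filter_upwards [hcoord i] with ω hω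
    simp only [Pi.mul_apply]
    rw [hω]
  have hkey : ∀ i : Fin d, ∫ ω, f ω i * h ω i ∂μ = ∫ ω, f ω i * (μ[h|m]) ω i ∂μ := by
    intro i
    have hmul : Integrable ((fun ω => f ω i) * (fun ω => h ω i)) μ := by
      exact sgd_integrable_mul (hfi i) (hhi i)
    calc ∫ ω, f ω i * h ω i ∂μ
        = ∫ ω, (μ[(fun ω => f ω i) * (fun ω => h ω i)|m]) ω ∂μ :=
          (integral_condExp hm).symm
      _ = ∫ ω, ((fun ω => f ω i) * μ[(fun ω => h ω i)|m]) ω ∂μ :=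
          integral_congr_ae (hpull i)
      _ = ∫ ω, f ω i * (μ[h|m]) ω i ∂μ := by
          refine integral_congr_ae ?_
          filter_upwards [hcoord i] with ω hω
          simp only [Pi.mul_apply]
          rw [hω]
  have hL : ∫ ω, ⟪f ω, h ω⟫ ∂μ = ∑ i, ∫ ω, f ω i * h ω i ∂μ := by
    rw [← integral_finset_sum _ (fun i _ => sgd_integrable_mul (hfi i) (hhi i))]
    refine integral_congr_ae (Filter.Eventually.of_forall fun ω => ?_)
    simp [PiLp.inner_apply, RCLike.inner_apply, conj_trivial, mul_comm]
  have hR : ∫ ω, ⟪f ω, (μ[h|m]) ω⟫ ∂μ = ∑ i, ∫ ω, f ω i * (μ[h|m]) ω i ∂μ := by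
    rw [← integral_finset_sum _ (fun i _ => hmuli i)]
    refine integral_congr_ae (Filter.Eventually.of_forall fun ω => ?_)
    simp [PiLp.inner_apply, RCLike.inner_apply, conj_trivial, mul_comm]
  rw [hL, hR]
  exact Finset.sum_congr rfl fun i _ => hkey i

end CondexpAux

set_option maxHeartbeats 1000000 in
/-- Convergence of SGD with low-precision gradients. Under `𝓛`-smoothness of `L` (bounded
below by `L_min`), step size `0 < η ≤ 1/(4𝓛)`, an adapted iterate process `w_{t+1} = w_t −
η·G_t` where the estimator `G_t` has conditional bias at most `B_W` relative to the true
gradient and conditional variance at most `(σ_S² + σ_Q²)/b`, the average expected squared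
gradient norm over `T` iterations is bounded by
`4·(E[L(w_0)] − L_min)/(η·T) + (2 + 4η𝓛)·B_W² + 2η𝓛·(σ_S² + σ_Q²)/b`. -/
theorem sgd_low_precision_convergence
    {Ω : Type*} {m0 : MeasurableSpace Ω} (μ : Measure Ω) [IsProbabilityMeasure μ]
    (ℱ : Filtration ℕ m0)
    (d : ℕ) (L : EuclideanSpace ℝ (Fin d) → ℝ) (𝓛 : ℝ) (h𝓛 : 0 < 𝓛)
    (hdiff : Differentiable ℝ L)
    (hlip : ∀ w w' : EuclideanSpace ℝ (Fin d),
      ‖gradient L w' - gradient L w‖ ≤ 𝓛 * ‖w' - w‖)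
    (Lmin : ℝ) (hbelow : ∀ w, Lmin ≤ L w)
    (η : ℝ) (hη : 0 < η) (hη' : η ≤ 1 / (4 * 𝓛))
    (T : ℕ) (hT : 1 ≤ T)
    (BW σS σQ : ℝ) (hBW : 0 ≤ BW) (hσS : 0 ≤ σS) (hσQ : 0 ≤ σQ)
    (b : ℕ) (hb : 1 ≤ b)
    (w G : ℕ → Ω → EuclideanSpace ℝ (Fin d))
    (hadapted : Adapted ℱ w)
    (hGmeas : ∀ t, StronglyMeasurable[ℱ (t + 1)] (G t))
    (hGL2 : ∀ t, MemLp (G t) 2 μ)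
    (hupdate : ∀ t ω, w (t + 1) ω = w t ω - η • G t ω)
    (hL0int : Integrable (fun ω => L (w 0 ω)) μ)
    (hbias : ∀ t, ∀ᵐ ω ∂μ,
      ‖(μ[G t | ℱ t]) ω - gradient L (w t ω)‖ ≤ BW)
    (hvar : ∀ t, ∀ᵐ ω ∂μ,
      (μ[(fun ω' => ‖G t ω' - (μ[G t | ℱ t]) ω'‖ ^ 2) | ℱ t]) ω ≤
        (σS ^ 2 + σQ ^ 2) / b) :
    (1 / (T : ℝ)) * ∑ t ∈ Finset.range T, ∫ ω, ‖gradient L (w t ω)‖ ^ 2 ∂μ ≤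
      4 * ((∫ ω, L (w 0 ω) ∂μ) - Lmin) / (η * T) +
        (2 + 4 * η * 𝓛) * BW ^ 2 + 2 * η * 𝓛 * (σS ^ 2 + σQ ^ 2) / b := by
  classical
  have hb0 : (0:ℝ) < b := by exact_mod_cast Nat.lt_of_lt_of_le Nat.zero_lt_one hb
  have hT0 : (0:ℝ) < T := by exact_mod_cast Nat.lt_of_lt_of_le Nat.zero_lt_one hT
  have hη𝓛 : η * 𝓛 ≤ 1/4 := by
    have h := (le_div_iff₀ (by positivity : (0:ℝ) < 4 * 𝓛)).1 hη'
    nlinarith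
  set σ2 : ℝ := (σS ^ 2 + σQ ^ 2) / b with hσ2def
  have hσ2 : 0 ≤ σ2 := by positivity
  set g : ℕ → Ω → EuclideanSpace ℝ (Fin d) := fun t ω => gradient L (w t ω) with hgdef
  have hgm : ∀ t, StronglyMeasurable[ℱ t] (g t) := by
    intro t
    have hgc : Continuous (gradient L) := by
      have hl : LipschitzWith (Real.toNNReal 𝓛) (gradient L) := by
        apply LipschitzWith.of_dist_le_mul
        intro a c
        rw [dist_eq_norm, dist_eq_norm, Real.coe_toNNReal 𝓛 h𝓛.le]
        exact hlip c a
      exact hl.continuous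
    exact hgc.comp_stronglyMeasurable (hadapted t).stronglyMeasurable
  have hgm0 : ∀ t, AEStronglyMeasurable (g t) μ := fun t =>
    ((hgm t).mono (ℱ.le t)).aestronglyMeasurable
  have hGm0 : ∀ t, AEStronglyMeasurable (G t) μ := fun t => (hGL2 t).aestronglyMeasurable
  -- pointwise descent inequality
  have hptw : ∀ t, ∀ ω, L (w (t+1) ω) ≤ L (w t ω) - η * ⟪g t ω, G t ω⟫
      + 𝓛/2 * η^2 * ‖G t ω‖^2 := by
    intro t ω
    have h := sgd_descent_lemma h𝓛.le hdiff (fun a c => hlip a c) (w t ω) (w (t+1) ω)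
    rw [hupdate t ω, sub_sub_cancel_left] at h
    have h3 : ⟪gradient L (w t ω), -(η • G t ω)⟫ = -(η * ⟪g t ω, G t ω⟫) := by
      rw [inner_neg_right, real_inner_smul_right]
    have h4 : ‖-(η • G t ω)‖^2 = η^2 * ‖G t ω‖^2 := by
      rw [norm_neg, norm_smul, Real.norm_eq_abs, mul_pow, sq_abs]
    rw [h3, h4] at h
    rw [hupdate t ω]
    linarith
  by_cases hg0 : MemLp (g 0) 2 μ
  · -- main case
    have hkey : ∀ t, MemLp (g t) 2 μ ∧ Integrable (fun ω => L (w t ω)) μ := by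
      intro t
      induction t with
      | zero => exact ⟨hg0, hL0int⟩
      | succ t ih =>
        obtain ⟨hgt, hLt⟩ := ih
        have hgt1 : MemLp (g (t+1)) 2 μ := by
          have hML2 : MemLp (fun ω => ‖g t ω‖ + 𝓛 * η * ‖G t ω‖) 2 μ :=
            hgt.norm.add (((hGL2 t).norm).const_mul _)
          refine MemLp.of_le hML2 (hgm0 (t+1)) (Filter.Eventually.of_forall fun ω => ?_)
          have h1 : ‖g (t+1) ω - g t ω‖ ≤ 𝓛 * ‖w (t+1) ω - w t ω‖ := hlip _ _
          have h2 : ‖w (t+1) ω - w t ω‖ = η * ‖G t ω‖ := by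
            rw [hupdate t ω, sub_sub_cancel_left, norm_neg, norm_smul, Real.norm_eq_abs,
              abs_of_nonneg hη.le]
          have h5 : ‖g (t+1) ω‖ ≤ ‖g t ω‖ + ‖g (t+1) ω - g t ω‖ :=
            calc ‖g (t+1) ω‖ = ‖g t ω + (g (t+1) ω - g t ω)‖ := by congr 1; abel
            _ ≤ _ := norm_add_le _ _
          have h6 : ‖g t ω‖ + 𝓛 * η * ‖G t ω‖
              ≤ ‖(‖g t ω‖ + 𝓛 * η * ‖G t ω‖)‖ := le_abs_self _
          rw [h2] at h1
          calc ‖g (t+1) ω‖ ≤ ‖g t ω‖ + 𝓛 * (η * ‖G t ω‖) := by linarith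
          _ = ‖g t ω‖ + 𝓛 * η * ‖G t ω‖ := by ring
          _ ≤ _ := h6
        have hLt1 : Integrable (fun ω => L (w (t+1) ω)) μ := by
          have hB : Integrable (fun ω => |Lmin| + |L (w t ω)| + η * (‖g t ω‖ * ‖G t ω‖)
              + 𝓛/2 * η^2 * ‖G t ω‖^2) μ := by
            refine (((integrable_const _).add hLt.abs).add
              ((sgd_integrable_mul hgt.norm (hGL2 t).norm).const_mul η)).add
              (((memLp_two_iff_integrable_sq_norm (hGm0 t)).1 (hGL2 t)).const_mul _)
          refine Integrable.mono' hB
            ((hdiff.continuous.comp_stronglyMeasurable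
              ((hadapted (t+1)).stronglyMeasurable.mono (ℱ.le _))).aestronglyMeasurable)
            (Filter.Eventually.of_forall fun ω => ?_)
          have hub := hptw t ω
          have hlb := hbelow (w (t+1) ω)
          have hip : |⟪g t ω, G t ω⟫| ≤ ‖g t ω‖ * ‖G t ω‖ := abs_real_inner_le_norm _ _
          rw [Real.norm_eq_abs, abs_le]
          constructor
          · have h9 := neg_abs_le Lmin
            have h10 : 0 ≤ η * (‖g t ω‖ * ‖G t ω‖) :=
              mul_nonneg hη.le (mul_nonneg (norm_nonneg _) (norm_nonneg _))
            have h11 : 0 ≤ 𝓛/2 * η^2 * ‖G t ω‖^2 := by positivity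
            have h12 : 0 ≤ |L (w t ω)| := abs_nonneg _
            linarith
          · have h7 : L (w t ω) ≤ |L (w t ω)| := le_abs_self _
            have h8 : -⟪g t ω, G t ω⟫ ≤ ‖g t ω‖ * ‖G t ω‖ := by
              have := neg_abs_le (⟪g t ω, G t ω⟫); linarith
            have h9 : 0 ≤ |Lmin| := abs_nonneg _
            nlinarith
        exact ⟨hgt1, hLt1⟩
    set S : ℕ → ℝ := fun t => ∫ ω, ‖g t ω‖^2 ∂μ with hSdef
    have hSnonneg : ∀ t, 0 ≤ S t := fun t => integral_nonneg fun ω => by positivity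
    set C : ℝ := (η/2 + 𝓛*η^2) * BW^2 + 𝓛*η^2/2 * σ2 with hCdef
    have hstep : ∀ t, η/4 * S t ≤ (∫ ω, L (w t ω) ∂μ) - (∫ ω, L (w (t+1) ω) ∂μ) + C := by
      intro t
      obtain ⟨hgt, hLt⟩ := hkey t
      obtain ⟨-, hLt1⟩ := hkey (t+1)
      have hmt_int : Integrable (μ[G t|ℱ t]) μ := integrable_condExp
      have hmt_sm : StronglyMeasurable[ℱ t] (μ[G t|ℱ t]) := stronglyMeasurable_condExp
      have hIntg2 : Integrable (fun ω => ‖g t ω‖^2) μ :=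
        (memLp_two_iff_integrable_sq_norm (hgm0 t)).1 hgt
      have hmtL2 : MemLp (μ[G t|ℱ t]) 2 μ := by
        have hdiffL2 : MemLp (fun ω => (μ[G t|ℱ t]) ω - g t ω) 2 μ := by
          refine MemLp.mono_exponent (memLp_top_of_bound ?_ BW (hbias t)) le_top
          exact ((hmt_sm.mono (ℱ.le t)).aestronglyMeasurable).sub (hgm0 t)
        have h := hgt.add hdiffL2
        exact h.ae_eq (Filter.Eventually.of_forall fun ω => by simp)
      have hGmint : MemLp (fun ω => G t ω - (μ[G t|ℱ t]) ω) 2 μ := (hGL2 t).sub hmtL2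
      have hInt_inner : Integrable (fun ω => ⟪g t ω, G t ω⟫) μ :=
        sgd_integrable_inner hgt (hGL2 t)
      have hIntG2 : Integrable (fun ω => ‖G t ω‖^2) μ :=
        (memLp_two_iff_integrable_sq_norm (hGm0 t)).1 (hGL2 t)
      -- (2) expectation of the descent inequality
      have h2 : (∫ ω, L (w (t+1) ω) ∂μ) ≤ (∫ ω, L (w t ω) ∂μ)
          - η * ∫ ω, ⟪g t ω, G t ω⟫ ∂μ + 𝓛/2*η^2 * ∫ ω, ‖G t ω‖^2 ∂μ := by
        have hint_c : Integrable (fun ω => η * ⟪g t ω, G t ω⟫) μ := hInt_inner.const_mul η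
        have hint_a : Integrable (fun ω => L (w t ω) - η * ⟪g t ω, G t ω⟫) μ :=
          hLt.sub hint_c
        have hint_b : Integrable (fun ω => 𝓛/2*η^2 * ‖G t ω‖^2) μ := hIntG2.const_mul _
        calc ∫ ω, L (w (t+1) ω) ∂μ
            ≤ ∫ ω, (L (w t ω) - η * ⟪g t ω, G t ω⟫ + 𝓛/2*η^2 * ‖G t ω‖^2) ∂μ :=
              integral_mono hLt1 (hint_a.add hint_b) (hptw t)
        _ = (∫ ω, L (w t ω) ∂μ) - η * ∫ ω, ⟪g t ω, G t ω⟫ ∂μ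
            + 𝓛/2*η^2 * ∫ ω, ‖G t ω‖^2 ∂μ := by
              rw [integral_add hint_a hint_b, integral_sub hLt hint_c,
                integral_const_mul, integral_const_mul]
      -- (3) replace G by its conditional expectation
      have h3 : ∫ ω, ⟪g t ω, G t ω⟫ ∂μ = ∫ ω, ⟪g t ω, (μ[G t|ℱ t]) ω⟫ ∂μ :=
        sgd_integral_inner_condexp (ℱ.le t) (hgm t) hgt (hGL2 t)
      -- (4) lower bound on the inner product with the conditional mean
      have h4 : S t / 2 - BW^2/2 ≤ ∫ ω, ⟪g t ω, (μ[G t|ℱ t]) ω⟫ ∂μ := by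
        have hint2 : Integrable (fun ω => ⟪g t ω, (μ[G t|ℱ t]) ω⟫) μ :=
          sgd_integrable_inner hgt hmtL2
        have hlow : ∀ᵐ ω ∂μ, ‖g t ω‖^2/2 - BW^2/2 ≤ ⟪g t ω, (μ[G t|ℱ t]) ω⟫ := by
          filter_upwards [hbias t] with ω hω
          have e1 : ⟪g t ω, (μ[G t|ℱ t]) ω⟫
              = ‖g t ω‖^2 + ⟪g t ω, (μ[G t|ℱ t]) ω - g t ω⟫ := by
            rw [inner_sub_right, real_inner_self_eq_norm_sq]
            ring
          have e2 : |⟪g t ω, (μ[G t|ℱ t]) ω - g t ω⟫|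
              ≤ ‖g t ω‖ * ‖(μ[G t|ℱ t]) ω - g t ω‖ := abs_real_inner_le_norm _ _
          have e3 : ‖g t ω‖ * ‖(μ[G t|ℱ t]) ω - g t ω‖ ≤ ‖g t ω‖ * BW :=
            mul_le_mul_of_nonneg_left hω (norm_nonneg _)
          have e4 := neg_abs_le (⟪g t ω, (μ[G t|ℱ t]) ω - g t ω⟫)
          nlinarith [sq_nonneg (‖g t ω‖ - BW)]
        have hint_d : Integrable (fun ω => ‖g t ω‖^2/2) μ := hIntg2.div_const 2
        have hint_e : Integrable (fun ω => ‖g t ω‖^2/2 - BW^2/2) μ :=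
          hint_d.sub (integrable_const _)
        have hm := integral_mono_ae hint_e hint2 hlow
        have heval : ∫ ω, (‖g t ω‖^2/2 - BW^2/2) ∂μ = S t/2 - BW^2/2 := by
          rw [integral_sub hint_d (integrable_const _), integral_div, integral_const]
          simp [measure_univ]
          rfl
        rw [heval] at hm
        exact hm
      -- (5) second moment bound
      have h5 : ∫ ω, ‖G t ω‖^2 ∂μ ≤ σ2 + 2 * S t + 2 * BW^2 := by
        have hIntGm2 : Integrable (fun ω => ‖G t ω - (μ[G t|ℱ t]) ω‖^2) μ :=
          (memLp_two_iff_integrable_sq_norm hGmint.aestronglyMeasurable).1 hGmint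
        have hIntm2 : Integrable (fun ω => ‖(μ[G t|ℱ t]) ω‖^2) μ :=
          (memLp_two_iff_integrable_sq_norm hmtL2.aestronglyMeasurable).1 hmtL2
        have hIntmGm : Integrable (fun ω => ⟪(μ[G t|ℱ t]) ω, G t ω - (μ[G t|ℱ t]) ω⟫) μ :=
          sgd_integrable_inner hmtL2 hGmint
        have hdecomp : ∀ ω, ‖G t ω‖^2 = ‖G t ω - (μ[G t|ℱ t]) ω‖^2
            + 2*⟪(μ[G t|ℱ t]) ω, G t ω - (μ[G t|ℱ t]) ω⟫ + ‖(μ[G t|ℱ t]) ω‖^2 := by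
          intro ω
          have h := norm_add_sq_real (G t ω - (μ[G t|ℱ t]) ω) ((μ[G t|ℱ t]) ω)
          rw [sub_add_cancel] at h
          rw [h, real_inner_comm]
        have hint_f : Integrable (fun ω => 2 * ⟪(μ[G t|ℱ t]) ω, G t ω - (μ[G t|ℱ t]) ω⟫) μ :=
          hIntmGm.const_mul 2
        have hint_g : Integrable (fun ω => ‖G t ω - (μ[G t|ℱ t]) ω‖^2
            + 2 * ⟪(μ[G t|ℱ t]) ω, G t ω - (μ[G t|ℱ t]) ω⟫) μ := hIntGm2.add hint_f
        have hsplit : ∫ ω, ‖G t ω‖^2 ∂μ = (∫ ω, ‖G t ω - (μ[G t|ℱ t]) ω‖^2 ∂μ)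
            + 2 * (∫ ω, ⟪(μ[G t|ℱ t]) ω, G t ω - (μ[G t|ℱ t]) ω⟫ ∂μ)
            + ∫ ω, ‖(μ[G t|ℱ t]) ω‖^2 ∂μ := by
          rw [← integral_const_mul, ← integral_add hIntGm2 hint_f,
            ← integral_add hint_g hIntm2]
          exact integral_congr_ae (Filter.Eventually.of_forall fun ω => hdecomp ω)
        -- cross term vanishes
        have hcross : ∫ ω, ⟪(μ[G t|ℱ t]) ω, G t ω - (μ[G t|ℱ t]) ω⟫ ∂μ = 0 := by
          rw [sgd_integral_inner_condexp (ℱ.le t) hmt_sm hmtL2 hGmint]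
          have hce : μ[(fun ω => G t ω - (μ[G t|ℱ t]) ω)|ℱ t] =ᵐ[μ] 0 := by
            have h1 : μ[(fun ω => G t ω - (μ[G t|ℱ t]) ω)|ℱ t]
                =ᵐ[μ] μ[G t|ℱ t] - μ[μ[G t|ℱ t]|ℱ t] :=
              condExp_sub ((hGL2 t).integrable one_le_two) hmt_int _
            have h2' : μ[μ[G t|ℱ t]|ℱ t] = μ[G t|ℱ t] :=
              condExp_of_stronglyMeasurable (ℱ.le t) hmt_sm hmt_int
            filter_upwards [h1] with ω hω
            rw [hω]
            simp [h2']
          calc ∫ ω, ⟪(μ[G t|ℱ t]) ω, (μ[(fun ω => G t ω - (μ[G t|ℱ t]) ω)|ℱ t]) ω⟫ ∂μ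
              = ∫ ω, (0:ℝ) ∂μ := by
                refine integral_congr_ae ?_
                filter_upwards [hce] with ω hω
                rw [hω]
                simp
          _ = 0 := integral_zero _ _
        -- conditional variance bound
        have hvarint : ∫ ω, ‖G t ω - (μ[G t|ℱ t]) ω‖^2 ∂μ ≤ σ2 := by
          have he : ∫ ω, (μ[(fun ω' => ‖G t ω' - (μ[G t|ℱ t]) ω'‖ ^ 2)|ℱ t]) ω ∂μ
              = ∫ ω, ‖G t ω - (μ[G t|ℱ t]) ω‖^2 ∂μ := integral_condExp (ℱ.le t)
          have hmono := integral_mono_ae integrable_condExp (integrable_const σ2)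
            (by filter_upwards [hvar t] with ω hω; exact hω)
          rw [he] at hmono
          simpa [measure_univ] using hmono
        -- conditional mean second moment bound
        have hmean : ∫ ω, ‖(μ[G t|ℱ t]) ω‖^2 ∂μ ≤ 2 * S t + 2 * BW^2 := by
          have hup : ∀ᵐ ω ∂μ, ‖(μ[G t|ℱ t]) ω‖^2 ≤ 2*‖g t ω‖^2 + 2*BW^2 := by
            filter_upwards [hbias t] with ω hω
            have e1 : ‖(μ[G t|ℱ t]) ω‖ ≤ ‖g t ω‖ + ‖(μ[G t|ℱ t]) ω - g t ω‖ :=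
              calc ‖(μ[G t|ℱ t]) ω‖ = ‖g t ω + ((μ[G t|ℱ t]) ω - g t ω)‖ := by congr 1; abel
              _ ≤ _ := norm_add_le _ _
            have e2 : ‖(μ[G t|ℱ t]) ω‖ ≤ ‖g t ω‖ + BW := by linarith
            nlinarith [norm_nonneg ((μ[G t|ℱ t]) ω), norm_nonneg (g t ω),
              sq_nonneg (‖g t ω‖ - BW)]
          have hint_h : Integrable (fun ω => 2 * ‖g t ω‖^2) μ := hIntg2.const_mul 2
          have hint_i : Integrable (fun ω => 2 * ‖g t ω‖^2 + 2 * BW^2) μ :=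
            hint_h.add (integrable_const _)
          calc ∫ ω, ‖(μ[G t|ℱ t]) ω‖^2 ∂μ
              ≤ ∫ ω, (2 * ‖g t ω‖^2 + 2 * BW^2) ∂μ := integral_mono_ae hIntm2 hint_i hup
          _ = 2 * S t + 2 * BW^2 := by
              rw [integral_add hint_h (integrable_const _), integral_const_mul,
                integral_const, probReal_univ, one_smul]
        linarith [hsplit, hcross ▸ hsplit]
      -- combine
      have hIG2nonneg : 0 ≤ ∫ ω, ‖G t ω‖^2 ∂μ := integral_nonneg fun ω => by positivity
      rw [h3] at h2
      nlinarith [mul_le_mul_of_nonneg_left h4 hη.le,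
        mul_le_mul_of_nonneg_left h5 (by positivity : (0:ℝ) ≤ 𝓛/2*η^2),
        mul_nonneg (mul_nonneg hη.le (hSnonneg t)) (sub_nonneg.2 hη𝓛)]
    -- summation
    have hsum : η/4 * ∑ t ∈ Finset.range T, S t
        ≤ ((∫ ω, L (w 0 ω) ∂μ) - Lmin) + T * C := by
      have htel : ∑ t ∈ Finset.range T,
          ((∫ ω, L (w t ω) ∂μ) - (∫ ω, L (w (t+1) ω) ∂μ))
          = (∫ ω, L (w 0 ω) ∂μ) - (∫ ω, L (w T ω) ∂μ) :=
        Finset.sum_range_sub' (fun t => ∫ ω, L (w t ω) ∂μ) T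
      have hLT : Lmin ≤ ∫ ω, L (w T ω) ∂μ := by
        have h0 : (Lmin:ℝ) = ∫ _ω, Lmin ∂μ := by simp [measure_univ]
        rw [h0]
        exact integral_mono (integrable_const _) (hkey T).2 fun ω => hbelow _
      calc η/4 * ∑ t ∈ Finset.range T, S t = ∑ t ∈ Finset.range T, η/4 * S t :=
            Finset.mul_sum _ _ _
      _ ≤ ∑ t ∈ Finset.range T,
            (((∫ ω, L (w t ω) ∂μ) - (∫ ω, L (w (t+1) ω) ∂μ)) + C) :=
          Finset.sum_le_sum fun t _ => hstep t
      _ = ((∫ ω, L (w 0 ω) ∂μ) - (∫ ω, L (w T ω) ∂μ)) + T * C := by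
          rw [Finset.sum_add_distrib, htel, Finset.sum_const, Finset.card_range,
            nsmul_eq_mul]
      _ ≤ _ := by linarith
    -- final arithmetic
    have hgoalL : ∑ t ∈ Finset.range T, (∫ ω, ‖gradient L (w t ω)‖ ^ 2 ∂μ)
        = ∑ t ∈ Finset.range T, S t := rfl
    rw [hgoalL]
    have hkey2 : ∑ t ∈ Finset.range T, S t
        ≤ (4 * (((∫ ω, L (w 0 ω) ∂μ) - Lmin) + T * C))/η := by
      rw [le_div_iff₀ hη]
      have h := mul_le_mul_of_nonneg_left hsum (by norm_num : (0:ℝ) ≤ 4)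
      calc (∑ t ∈ Finset.range T, S t) * η
          = 4 * (η/4 * ∑ t ∈ Finset.range T, S t) := by ring
      _ ≤ 4 * (((∫ ω, L (w 0 ω) ∂μ) - Lmin) + ↑T * C) := h
    calc (1 / (T : ℝ)) * ∑ t ∈ Finset.range T, S t
        ≤ (1 / (T : ℝ)) * ((4 * (((∫ ω, L (w 0 ω) ∂μ) - Lmin) + T * C))/η) := by
          apply mul_le_mul_of_nonneg_left hkey2 (by positivity)
    _ = 4 * ((∫ ω, L (w 0 ω) ∂μ) - Lmin) / (η * T)
        + (2 + 4 * η * 𝓛) * BW ^ 2 + 2 * η * 𝓛 * (σS ^ 2 + σQ ^ 2) / b := by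
          rw [hCdef, hσ2def]
          field_simp
          ring
  · -- degenerate case: the gradient at time 0 is not square integrable
    have hwsum : ∀ t ω, w t ω = w 0 ω - η • (∑ s ∈ Finset.range t, G s ω) := by
      intro t
      induction t with
      | zero => intro ω; simp
      | succ t ih =>
        intro ω
        rw [hupdate t ω, ih ω, Finset.sum_range_succ, smul_add, sub_sub]
    have hSzero : ∀ t, (∫ ω, ‖gradient L (w t ω)‖^2 ∂μ) = 0 := by
      intro t
      by_cases hint : Integrable (fun ω => ‖g t ω‖^2) μ
      · exfalso
        apply hg0
        have hgt : MemLp (g t) 2 μ := (memLp_two_iff_integrable_sq_norm (hgm0 t)).2 hint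
        have hsumL2 : MemLp (fun ω => ∑ s ∈ Finset.range t, G s ω) 2 μ :=
          MemLp.ae_eq (Filter.Eventually.of_forall fun ω =>
              (Finset.sum_apply ω (Finset.range t) G))
            (memLp_finset_sum' _ (fun s _ => hGL2 s))
        have hML2 : MemLp
            (fun ω => ‖g t ω‖ + 𝓛 * η * ‖∑ s ∈ Finset.range t, G s ω‖) 2 μ :=
          hgt.norm.add ((hsumL2.norm).const_mul _)
        refine MemLp.of_le hML2 (hgm0 0) (Filter.Eventually.of_forall fun ω => ?_)
        have h1 : ‖g 0 ω - g t ω‖ ≤ 𝓛 * ‖w 0 ω - w t ω‖ := hlip _ _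
        have h2 : ‖w 0 ω - w t ω‖ = η * ‖∑ s ∈ Finset.range t, G s ω‖ := by
          rw [hwsum t ω]
          have h7 : w 0 ω - (w 0 ω - η • ∑ s ∈ Finset.range t, G s ω)
              = η • ∑ s ∈ Finset.range t, G s ω := by abel
          rw [h7, norm_smul, Real.norm_eq_abs, abs_of_nonneg hη.le]
        have h5 : ‖g 0 ω‖ ≤ ‖g t ω‖ + ‖g 0 ω - g t ω‖ :=
          calc ‖g 0 ω‖ = ‖g t ω + (g 0 ω - g t ω)‖ := by congr 1; abel
          _ ≤ _ := norm_add_le _ _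
        have h6 : ‖g t ω‖ + 𝓛 * η * ‖∑ s ∈ Finset.range t, G s ω‖
            ≤ ‖(‖g t ω‖ + 𝓛 * η * ‖∑ s ∈ Finset.range t, G s ω‖)‖ := le_abs_self _
        rw [h2] at h1
        calc ‖g 0 ω‖ ≤ ‖g t ω‖ + 𝓛 * (η * ‖∑ s ∈ Finset.range t, G s ω‖) := by linarith
        _ = ‖g t ω‖ + 𝓛 * η * ‖∑ s ∈ Finset.range t, G s ω‖ := by ring
        _ ≤ _ := h6
      · exact integral_undef hint
    have hzero : ∑ t ∈ Finset.range T, ∫ ω, ‖gradient L (w t ω)‖ ^ 2 ∂μ = 0 :=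
      Finset.sum_eq_zero fun t _ => hSzero t
    rw [hzero, mul_zero]
    have hD : 0 ≤ (∫ ω, L (w 0 ω) ∂μ) - Lmin := by
      have h0 : (Lmin:ℝ) = ∫ _ω, Lmin ∂μ := by simp [measure_univ]
      have h2 : (∫ _ω, Lmin ∂μ) ≤ ∫ ω, L (w 0 ω) ∂μ :=
        integral_mono (integrable_const _) hL0int fun ω => hbelow _
      linarith
    have h1 : 0 ≤ 4 * ((∫ ω, L (w 0 ω) ∂μ) - Lmin) / (η * T) :=
      div_nonneg (mul_nonneg (by norm_num) hD) (by positivity)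
    have h2 : 0 ≤ (2 + 4 * η * 𝓛) * BW ^ 2 := by positivity
    have h3 : 0 ≤ 2 * η * 𝓛 * (σS ^ 2 + σQ ^ 2) / b := by positivity
    linarith
end
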